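/- For every integer n ≥ 1, every σ > 0, every ρ ≥ 0 and every y > 0: lim_{h→0} (σ²/(h(2ρ+h))) · ( F_{χ²_n(ρ²/σ²)}(y) − F_{χ²_n((ρ+h)²/σ²)}(y) ) = f_{χ²_{n+2}(ρ²/σ²)}(y). -/

import Mathlib

open MeasureTheory Real Filter

noncomputable section

/-- Noncentral chi-square pdf with `k` degrees of freedom and noncentrality `lam`. -/
def ncChiPdf (k : ℕ) (lam y : ℝ) : ℝ :=
  ∑' i : ℕ, (Real.exp (-lam / 2) * (lam / 2) ^ i / (i.factorial : ℝ)) *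
    (y ^ ((k : ℝ) / 2 + i - 1) * Real.exp (-y / 2) /
      (2 ^ ((k : ℝ) / 2 + i) * Real.Gamma ((k : ℝ) / 2 + i)))

/-- Noncentral chi-square cdf. -/
def ncChiCdf (k : ℕ) (lam y : ℝ) : ℝ := ∫ t in (0:ℝ)..y, ncChiPdf k lam t

end

noncomputable section NCAux

open Set

/-- Poisson weight. -/
def ncW (lam : ℝ) (i : ℕ) : ℝ := Real.exp (-lam / 2) * (lam / 2) ^ i / (i.factorial : ℝ)

/-- Derivative of the Poisson weight in `lam`. -/
def ncWd (lam : ℝ) (i : ℕ) : ℝ :=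
  (Real.exp (-lam / 2) * (-1/2) * (lam / 2) ^ i
    + Real.exp (-lam / 2) * ((i : ℝ) * (lam / 2) ^ (i - 1) * (1/2))) / (i.factorial : ℝ)

lemma hasDerivAt_ncW (i : ℕ) (lam : ℝ) : HasDerivAt (fun x => ncW x i) (ncWd lam i) lam := by
  have h0 : HasDerivAt (fun x : ℝ => -x / 2) (-1/2) lam := by
    simpa using ((hasDerivAt_id lam).neg.div_const 2)
  have h1 : HasDerivAt (fun x : ℝ => Real.exp (-x / 2)) (Real.exp (-lam/2) * (-1/2)) lam := by
    simpa [Function.comp_def] using (Real.hasDerivAt_exp (-lam/2)).comp lam h0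
  have h2 : HasDerivAt (fun x : ℝ => (x / 2) ^ i)
      ((i:ℝ) * (lam/2) ^ (i-1) * (1/2)) lam := by
    have h3 : HasDerivAt (fun x : ℝ => x / 2) (1/2) lam := by
      simpa using (hasDerivAt_id lam).div_const 2
    simpa [mul_assoc, Function.comp_def] using (hasDerivAt_pow i (lam/2)).comp lam h3
  have := (h1.mul h2).div_const (i.factorial : ℝ)
  simpa [ncW, ncWd, mul_assoc, mul_comm, mul_left_comm] using this

lemma summable_ncW (lam : ℝ) : Summable (fun i => ncW lam i) := by
  have := (Real.summable_pow_div_factorial (lam/2)).mul_left (Real.exp (-lam/2))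
  refine this.congr fun i => ?_
  simp [ncW, mul_div_assoc]

lemma ncW_nonneg {lam : ℝ} (h : 0 ≤ lam) (i : ℕ) : 0 ≤ ncW lam i := by
  unfold ncW; positivity

/-- Kernel of the (central) chi-square-type integrals. -/
def gfun (a t : ℝ) : ℝ := t ^ (a - 1) * Real.exp (-t / 2)

lemma gfun_integrableOn {a : ℝ} (ha : 0 < a) : IntegrableOn (gfun a) (Ioi 0) := by
  have h := integrableOn_rpow_mul_exp_neg_mul_rpow (s := a - 1) (p := 1) (b := 1/2)
    (by linarith) zero_lt_one (by norm_num)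
  refine (h.congr_fun (fun t ht => ?_) measurableSet_Ioi)
  simp only [gfun, Real.rpow_one]
  ring_nf

lemma gfun_integral {a : ℝ} (ha : 0 < a) :
    ∫ t in Ioi (0:ℝ), gfun a t = 2 ^ a * Real.Gamma a := by
  have h := integral_rpow_mul_exp_neg_mul_Ioi ha (r := 1/2) (by norm_num)
  have h2 : ((1:ℝ)/(1/2)) = 2 := by norm_num
  rw [h2] at h
  rw [← h]
  refine setIntegral_congr_fun measurableSet_Ioi fun t ht => ?_
  simp only [gfun]
  ring_nf

def Bint (a y : ℝ) : ℝ := ∫ t in (0:ℝ)..y, gfun a t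

lemma gfun_nonneg_on {a t : ℝ} (ht : 0 < t) : 0 ≤ gfun a t := by
  unfold gfun; positivity

lemma Bint_eq {a y : ℝ} (hy : 0 < y) : Bint a y = ∫ t in Ioc (0:ℝ) y, gfun a t := by
  rw [Bint, intervalIntegral.integral_of_le hy.le]

lemma Bint_nonneg {a y : ℝ} (hy : 0 < y) : 0 ≤ Bint a y := by
  rw [Bint_eq hy]
  exact setIntegral_nonneg measurableSet_Ioc fun t ht => gfun_nonneg_on ht.1

lemma Bint_le {a y : ℝ} (ha : 0 < a) (hy : 0 < y) :
    Bint a y ≤ 2 ^ a * Real.Gamma a := by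
  rw [Bint_eq hy, ← gfun_integral ha]
  refine setIntegral_mono_set (gfun_integrableOn ha) ?_ ?_
  · filter_upwards [self_mem_ae_restrict measurableSet_Ioi] with t ht
    exact gfun_nonneg_on ht
  · exact HasSubset.Subset.eventuallyLE Ioc_subset_Ioi_self

lemma Bint_intervalIntegrable {a : ℝ} (ha : 0 < a) {y : ℝ} (hy : 0 < y) :
    IntervalIntegrable (gfun a) volume 0 y := by
  rw [intervalIntegrable_iff_integrableOn_Ioc_of_le hy.le]
  exact (gfun_integrableOn ha).mono_set Ioc_subset_Ioi_self

/-- Key FTC identity. -/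
lemma Bint_telescope {a y : ℝ} (ha : 0 < a) (hy : 0 < y) :
    a * Bint a y - (1/2) * Bint (a+1) y = y ^ a * Real.exp (-y / 2) := by
  have hderiv : ∀ t ∈ Ioo (0:ℝ) y,
      HasDerivAt (fun t => t ^ a * Real.exp (-t/2))
        (a * gfun a t - (1/2) * gfun (a+1) t) t := by
    intro t ht
    have h1 : HasDerivAt (fun t : ℝ => t ^ a) (a * t ^ (a-1)) t :=
      Real.hasDerivAt_rpow_const (Or.inl ht.1.ne')
    have h0 : HasDerivAt (fun x : ℝ => -x / 2) (-1/2) t := by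
      simpa using ((hasDerivAt_id t).neg.div_const 2)
    have h2 : HasDerivAt (fun t : ℝ => Real.exp (-t / 2)) (Real.exp (-t/2) * (-1/2)) t := by
      simpa [Function.comp_def] using (Real.hasDerivAt_exp (-t/2)).comp t h0
    have : HasDerivAt (fun t : ℝ => t ^ a * Real.exp (-t/2))
        (a * t ^ (a-1) * Real.exp (-t/2) + t ^ a * (Real.exp (-t/2) * (-1/2))) t := h1.mul h2
    convert this using 1
    have h3 : t ^ (a+1-1) = t ^ a := by norm_num
    simp only [gfun, h3]
    have ht' : t ^ a = t ^ (a - 1) * t := by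
      rw [← Real.rpow_add_one ht.1.ne']; ring_nf
    rw [ht']; ring
  have hint : IntervalIntegrable (fun t => a * gfun a t - (1/2) * gfun (a+1) t) volume 0 y :=
    ((Bint_intervalIntegrable ha hy).const_mul a).sub
      ((Bint_intervalIntegrable (by linarith) hy).const_mul (1/2))
  have hlim0 : Tendsto (fun t => t ^ a * Real.exp (-t/2)) (nhdsWithin 0 (Ioi 0)) (nhds 0) := by
    have h1 : Tendsto (fun t : ℝ => t ^ a) (nhdsWithin 0 (Ioi 0)) (nhds 0) := by
      have := (Real.continuousAt_rpow_const 0 a (Or.inr ha.le)).tendsto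
      simpa [Real.zero_rpow ha.ne'] using this.mono_left nhdsWithin_le_nhds
    have h2 : Tendsto (fun t : ℝ => Real.exp (-t/2)) (nhdsWithin 0 (Ioi 0)) (nhds 1) := by
      have : ContinuousAt (fun t : ℝ => Real.exp (-t/2)) 0 := by fun_prop
      simpa using this.tendsto.mono_left nhdsWithin_le_nhds
    simpa using h1.mul h2
  have hlimy : Tendsto (fun t => t ^ a * Real.exp (-t/2)) (nhdsWithin y (Iio y))
      (nhds (y ^ a * Real.exp (-y/2))) := by
    have : ContinuousAt (fun t : ℝ => t ^ a * Real.exp (-t/2)) y :=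
      (Real.continuousAt_rpow_const y a (Or.inl hy.ne')).mul (by fun_prop)
    exact this.tendsto.mono_left nhdsWithin_le_nhds
  have := intervalIntegral.integral_eq_sub_of_hasDerivAt_of_tendsto hy hderiv hint hlim0 hlimy
  rw [intervalIntegral.integral_sub ((Bint_intervalIntegrable ha hy).const_mul a)
      ((Bint_intervalIntegrable (by linarith) hy).const_mul (1/2)),
    intervalIntegral.integral_const_mul, intervalIntegral.integral_const_mul] at this
  unfold Bint
  linarith [this]

/-- Exponent sequence. -/
def aE (n i : ℕ) : ℝ := (n : ℝ) / 2 + i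

lemma aE_pos {n : ℕ} (hn : 1 ≤ n) (i : ℕ) : 0 < aE n i := by
  have : (1:ℝ) ≤ (n:ℝ) := by exact_mod_cast hn
  have : (0:ℝ) ≤ i := Nat.cast_nonneg i
  unfold aE
  nlinarith [Nat.cast_nonneg (α := ℝ) i, (by exact_mod_cast hn : (1:ℝ) ≤ (n:ℝ))]

lemma aE_succ (n i : ℕ) : aE n (i+1) = aE n i + 1 := by
  unfold aE; push_cast; ring

/-- Normalized incomplete-integral sequence. -/
def Aq (n : ℕ) (y : ℝ) (i : ℕ) : ℝ :=
  Bint (aE n i) y / (2 ^ (aE n i) * Real.Gamma (aE n i))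

lemma Aq_mem {n : ℕ} (hn : 1 ≤ n) {y : ℝ} (hy : 0 < y) (i : ℕ) :
    Aq n y i ∈ Icc (0:ℝ) 1 := by
  have ha := aE_pos hn i
  have hc : 0 < 2 ^ (aE n i) * Real.Gamma (aE n i) := by positivity
  constructor
  · exact div_nonneg (Bint_nonneg hy) hc.le
  · rw [Aq, div_le_one hc]
    exact Bint_le ha hy

lemma Aq_abs_le {n : ℕ} (hn : 1 ≤ n) {y : ℝ} (hy : 0 < y) (i : ℕ) : |Aq n y i| ≤ 1 := by
  have h := Aq_mem hn hy i
  rw [abs_le]; exact ⟨by linarith [h.1], h.2⟩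

/-- Series representation of the cdf. -/
lemma ncChiCdf_eq {n : ℕ} (hn : 1 ≤ n) {lam y : ℝ} (hl : 0 ≤ lam) (hy : 0 < y) :
    ncChiCdf n lam y = ∑' i, ncW lam i * Aq n y i := by
  have hF_int : ∀ i : ℕ, Integrable
      (fun t => ncW lam i * (gfun (aE n i) t / (2 ^ (aE n i) * Real.Gamma (aE n i))))
      (volume.restrict (Ioc (0:ℝ) y)) := by
    intro i
    exact (((gfun_integrableOn (aE_pos hn i)).mono_set Ioc_subset_Ioi_self).div_const
      _).const_mul _
  have hval : ∀ i : ℕ, (∫ t in Ioc (0:ℝ) y,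
      ‖ncW lam i * (gfun (aE n i) t / (2 ^ (aE n i) * Real.Gamma (aE n i)))‖)
        = ncW lam i * Aq n y i := by
    intro i
    have ha := aE_pos hn i
    have hc : 0 < 2 ^ (aE n i) * Real.Gamma (aE n i) := by positivity
    rw [show (∫ t in Ioc (0:ℝ) y,
        ‖ncW lam i * (gfun (aE n i) t / (2 ^ (aE n i) * Real.Gamma (aE n i)))‖)
        = ∫ t in Ioc (0:ℝ) y,
          ncW lam i * (gfun (aE n i) t / (2 ^ (aE n i) * Real.Gamma (aE n i))) from ?_]
    · rw [integral_const_mul, integral_div, ← Bint_eq hy]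
      rfl
    · refine integral_congr_ae ?_
      filter_upwards [self_mem_ae_restrict measurableSet_Ioc] with t ht
      have h1 : 0 ≤ gfun (aE n i) t := gfun_nonneg_on ht.1
      have h2 : 0 ≤ ncW lam i := ncW_nonneg hl i
      rw [Real.norm_of_nonneg (by positivity)]
  have hF_sum : Summable (fun i : ℕ => ∫ t in Ioc (0:ℝ) y,
      ‖ncW lam i * (gfun (aE n i) t / (2 ^ (aE n i) * Real.Gamma (aE n i)))‖) := by
    refine Summable.of_nonneg_of_le (fun i => integral_nonneg fun t => norm_nonneg _)
      (fun i => ?_) (summable_ncW lam)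
    rw [hval i]
    have h := Aq_mem hn hy i
    calc ncW lam i * Aq n y i ≤ ncW lam i * 1 :=
          mul_le_mul_of_nonneg_left h.2 (ncW_nonneg hl i)
      _ = ncW lam i := mul_one _
  have hswap := integral_tsum_of_summable_integral_norm hF_int hF_sum
  rw [ncChiCdf, intervalIntegral.integral_of_le hy.le]
  have hptw : ∀ t : ℝ, ncChiPdf n lam t
      = ∑' i, ncW lam i * (gfun (aE n i) t / (2 ^ (aE n i) * Real.Gamma (aE n i))) := by
    intro t
    refine tsum_congr fun i => ?_
    simp only [ncChiPdf, ncW, gfun, aE]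
  calc ∫ t in Ioc (0:ℝ) y, ncChiPdf n lam t
      = ∫ t in Ioc (0:ℝ) y,
        ∑' i, ncW lam i * (gfun (aE n i) t / (2 ^ (aE n i) * Real.Gamma (aE n i))) := by
        exact integral_congr_ae (Eventually.of_forall fun t => hptw t)
    _ = ∑' i, ∫ t in Ioc (0:ℝ) y,
        ncW lam i * (gfun (aE n i) t / (2 ^ (aE n i) * Real.Gamma (aE n i))) := hswap.symm
    _ = ∑' i, ncW lam i * Aq n y i := by
        refine tsum_congr fun i => ?_
        have := hval i
        rw [← this]
        refine integral_congr_ae ?_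
        filter_upwards [self_mem_ae_restrict measurableSet_Ioc] with t ht
        have h1 : 0 ≤ gfun (aE n i) t := gfun_nonneg_on ht.1
        have h2 : 0 ≤ ncW lam i := ncW_nonneg hl i
        have hc : 0 < 2 ^ (aE n i) * Real.Gamma (aE n i) := by
          have := aE_pos hn i; positivity
        rw [Real.norm_of_nonneg (by positivity)]

open Set in
lemma summable_v1 (x : ℝ) :
    Summable (fun i : ℕ => (i:ℝ) * x ^ (i-1) / (i.factorial : ℝ)) := by
  have hg : Summable (fun j : ℕ => x ^ j / (j.factorial : ℝ)) :=
    Real.summable_pow_div_factorial x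
  have h2 : Summable (fun j : ℕ => ((j+1:ℕ):ℝ) * x ^ ((j+1)-1) / (((j+1:ℕ)).factorial : ℝ)) := by
    refine hg.congr fun j => ?_
    rw [Nat.add_sub_cancel, Nat.factorial_succ]
    have hj : ((j.factorial : ℝ)) ≠ 0 := by positivity
    push_cast
    field_simp
  exact (summable_nat_add_iff 1).mp h2

lemma ncWd_abs_le {lam R : ℝ} (i : ℕ) (hR : 0 < R) (h1 : -R < lam) (h2 : lam < R) :
    |ncWd lam i| ≤ (Real.exp (R/2) * (1/2) * (R/2) ^ i
      + Real.exp (R/2) * ((i:ℝ) * (R/2) ^ (i-1) * (1/2))) / (i.factorial : ℝ) := by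
  have hp : |lam/2| ≤ R/2 := by rw [abs_le]; constructor <;> linarith
  have he : Real.exp (-lam/2) ≤ Real.exp (R/2) := Real.exp_le_exp.mpr (by linarith)
  have hfac : (0:ℝ) < (i.factorial : ℝ) := by positivity
  rw [ncWd, abs_div, abs_of_pos hfac]
  gcongr ?_ / _
  refine (abs_add_le _ _).trans ?_
  have ha1 : |Real.exp (-lam/2) * (-1/2) * (lam/2)^i|
      = Real.exp (-lam/2) * (1/2) * |lam/2|^i := by
    rw [abs_mul, abs_mul, abs_pow, abs_of_pos (Real.exp_pos _)]
    norm_num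
  have ha2 : |Real.exp (-lam/2) * ((i:ℝ) * (lam/2)^(i-1) * (1/2))|
      = Real.exp (-lam/2) * ((i:ℝ) * |lam/2|^(i-1) * (1/2)) := by
    rw [abs_mul, abs_mul, abs_mul, abs_pow, abs_of_pos (Real.exp_pos _),
      abs_of_nonneg (Nat.cast_nonneg i)]
    norm_num
  rw [ha1, ha2]
  have hx0 : (0:ℝ) ≤ |lam/2| := abs_nonneg _
  gcongr

lemma hasDerivAt_ncSeries (A : ℕ → ℝ) (hA : ∀ i, |A i| ≤ 1) {lam0 : ℝ} (h0 : 0 ≤ lam0) :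
    HasDerivAt (fun lam => ∑' i, ncW lam i * A i) (∑' i, ncWd lam0 i * A i) lam0 := by
  set R : ℝ := lam0 + 1 with hRdef
  have hR : 0 < R := by linarith
  set u : ℕ → ℝ := fun i => (Real.exp (R/2) * (1/2) * (R/2) ^ i
      + Real.exp (R/2) * ((i:ℝ) * (R/2) ^ (i-1) * (1/2))) / (i.factorial : ℝ) with hu
  have hu_sum : Summable u := by
    have hs1 : Summable (fun i : ℕ => (R/2) ^ i / (i.factorial : ℝ)) :=
      Real.summable_pow_div_factorial _
    have hs2 := summable_v1 (R/2)
    refine ((hs1.mul_left (Real.exp (R/2) * (1/2))).add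
      (hs2.mul_left (Real.exp (R/2) * (1/2)))).congr fun i => ?_
    simp only [hu]
    field_simp
  refine hasDerivAt_tsum_of_isPreconnected hu_sum isOpen_Ioo isPreconnected_Ioo
    (g := fun i lam => ncW lam i * A i) (g' := fun i lam => ncWd lam i * A i)
    (fun i lam _ => (hasDerivAt_ncW i lam).mul_const (A i))
    (fun i lam hlam => ?_) (?_ : lam0 ∈ Ioo (-R) R) ?_ (?_ : lam0 ∈ Ioo (-R) R)
  · calc ‖ncWd lam i * A i‖ = |ncWd lam i| * |A i| := abs_mul _ _
      _ ≤ |ncWd lam i| * 1 := mul_le_mul_of_nonneg_left (hA i) (abs_nonneg _)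
      _ = |ncWd lam i| := mul_one _
      _ ≤ u i := ncWd_abs_le i hR hlam.1 hlam.2
  · exact ⟨by linarith, by linarith⟩
  · refine Summable.of_norm_bounded (summable_ncW lam0) fun i => ?_
    rw [norm_mul]
    calc ‖ncW lam0 i‖ * ‖A i‖ ≤ ‖ncW lam0 i‖ * 1 :=
          mul_le_mul_of_nonneg_left (hA i) (norm_nonneg _)
      _ = |ncW lam0 i| := mul_one _
      _ = ncW lam0 i := abs_of_nonneg (ncW_nonneg h0 i)
  · exact ⟨by linarith, by linarith⟩

lemma summable_ncWd_mul (A : ℕ → ℝ) (hA : ∀ i, |A i| ≤ 1) {lam0 : ℝ} (h0 : 0 ≤ lam0) :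
    Summable (fun i => ncWd lam0 i * A i) := by
  set R : ℝ := lam0 + 1 with hRdef
  have hR : 0 < R := by linarith
  have hu_sum : Summable (fun i : ℕ => (Real.exp (R/2) * (1/2) * (R/2) ^ i
      + Real.exp (R/2) * ((i:ℝ) * (R/2) ^ (i-1) * (1/2))) / (i.factorial : ℝ)) := by
    have hs1 : Summable (fun i : ℕ => (R/2) ^ i / (i.factorial : ℝ)) :=
      Real.summable_pow_div_factorial _
    have hs2 := summable_v1 (R/2)
    refine ((hs1.mul_left (Real.exp (R/2) * (1/2))).add
      (hs2.mul_left (Real.exp (R/2) * (1/2)))).congr fun i => ?_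
    field_simp
  refine Summable.of_norm_bounded hu_sum fun i => ?_
  calc ‖ncWd lam0 i * A i‖ = |ncWd lam0 i| * |A i| := abs_mul _ _
    _ ≤ |ncWd lam0 i| * 1 := mul_le_mul_of_nonneg_left (hA i) (abs_nonneg _)
    _ = |ncWd lam0 i| := mul_one _
    _ ≤ _ := ncWd_abs_le i hR (by linarith) (by linarith)

lemma summable_ncW_mul (A : ℕ → ℝ) (hA : ∀ i, |A i| ≤ 1) (lam0 : ℝ) :
    Summable (fun i => ncW lam0 i * A i) := by
  refine Summable.of_norm_bounded (summable_ncW lam0).abs fun i => ?_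
  rw [norm_mul]
  calc ‖ncW lam0 i‖ * ‖A i‖ ≤ ‖ncW lam0 i‖ * 1 :=
        mul_le_mul_of_nonneg_left (hA i) (norm_nonneg _)
    _ = |ncW lam0 i| := mul_one _

/-- The telescoping identity for the derivative series. -/
lemma tsum_ncWd_mul (A : ℕ → ℝ) (hA : ∀ i, |A i| ≤ 1) {lam0 : ℝ} (h0 : 0 ≤ lam0) :
    ∑' i, ncWd lam0 i * A i
      = (1/2) * ((∑' i, ncW lam0 i * A (i+1)) - ∑' i, ncW lam0 i * A i) := by
  have hA' : ∀ i, |A (i+1)| ≤ 1 := fun i => hA (i+1)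
  have S1 : Summable (fun i => ncWd lam0 i * A i) := summable_ncWd_mul A hA h0
  have S2 : Summable (fun i => ncW lam0 i * A i) := summable_ncW_mul A hA lam0
  have S3 : Summable (fun i => ncW lam0 i * A (i+1)) :=
    summable_ncW_mul (fun i => A (i+1)) hA' lam0
  have S2s : Summable (fun i => ncW lam0 (i+1) * A (i+1)) := (summable_nat_add_iff 1).mpr S2
  have hterm : ∀ i : ℕ, ncWd lam0 (i+1) * A (i+1)
      = (1/2) * (ncW lam0 i * A (i+1)) - (1/2) * (ncW lam0 (i+1) * A (i+1)) := by
    intro i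
    have : (1:ℝ)/2 * ncW lam0 i - 1/2 * ncW lam0 (i+1) = ncWd lam0 (i+1) := by
      rw [ncW, ncW, ncWd, Nat.add_sub_cancel, Nat.factorial_succ, pow_succ]
      have h1 : ((i.factorial : ℝ)) ≠ 0 := by positivity
      have h2 : ((i:ℝ) + 1) ≠ 0 := by positivity
      push_cast
      field_simp
      ring
    rw [← this]; ring
  have h0term : ncWd lam0 0 * A 0 = -(1/2) * (ncW lam0 0 * A 0) := by
    rw [ncW, ncWd]
    norm_num
    ring
  rw [S1.tsum_eq_zero_add, S2.tsum_eq_zero_add, h0term]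
  have hshift : ∑' i, ncWd lam0 (i+1) * A (i+1)
      = (1/2) * (∑' i, ncW lam0 i * A (i+1)) - (1/2) * (∑' i, ncW lam0 (i+1) * A (i+1)) := by
    rw [← tsum_mul_left, ← tsum_mul_left, ← Summable.tsum_sub (S3.mul_left _) (S2s.mul_left _)]
    exact tsum_congr hterm
  rw [hshift]
  ring


open Set in
/-- The pdf with `n+2` degrees of freedom as a telescoping series. -/
lemma ncChiPdf_eq_telescope {n : ℕ} (hn : 1 ≤ n) {lam y : ℝ} (hy : 0 < y) :
    ncChiPdf (n+2) lam y = ∑' i, ncW lam i * ((Aq n y i - Aq n y (i+1)) / 2) := by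
  refine tsum_congr fun i => ?_
  have ha := aE_pos hn i
  have hG : 0 < Real.Gamma (aE n i) := Real.Gamma_pos_of_pos ha
  have h2a : (0:ℝ) < 2 ^ (aE n i) := Real.rpow_pos_of_pos two_pos _
  have hdiff : Aq n y i - Aq n y (i+1)
      = (aE n i * Bint (aE n i) y - (1/2) * Bint (aE n i + 1) y)
        / (2 ^ (aE n i) * (aE n i * Real.Gamma (aE n i))) := by
    rw [Aq, Aq, aE_succ, Real.Gamma_add_one ha.ne',
      Real.rpow_add two_pos, Real.rpow_one]
    field_simp
  rw [hdiff, Bint_telescope ha hy]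
  have he1 : ((n+2:ℕ):ℝ)/2 + (i:ℝ) - 1 = aE n i := by rw [aE]; push_cast; ring
  have he2 : ((n+2:ℕ):ℝ)/2 + (i:ℝ) = aE n i + 1 := by rw [aE]; push_cast; ring
  rw [ncW, he1, he2, Real.Gamma_add_one ha.ne', Real.rpow_add two_pos, Real.rpow_one]
  ring

end NCAux

/-- For every `n ≥ 1`, `σ > 0`, `ρ ≥ 0`, `y > 0`:
`(σ²/(h(2ρ+h)))(F_{χ²ₙ(ρ²/σ²)}(y) − F_{χ²ₙ((ρ+h)²/σ²)}(y)) → f_{χ²_{n+2}(ρ²/σ²)}(y)`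
as `h → 0`. -/
theorem ncChi_cdf_difference_limit
    (n : ℕ) (hn : 1 ≤ n) (σ ρ y : ℝ) (hσ : 0 < σ) (hρ : 0 ≤ ρ) (hy : 0 < y) :
    Filter.Tendsto
      (fun h : ℝ => (σ ^ 2 / (h * (2 * ρ + h))) *
        (ncChiCdf n (ρ ^ 2 / σ ^ 2) y - ncChiCdf n ((ρ + h) ^ 2 / σ ^ 2) y))
      (nhdsWithin 0 {0}ᶜ) (nhds (ncChiPdf (n + 2) (ρ ^ 2 / σ ^ 2) y)) := by
  have hσ2 : (0:ℝ) < σ ^ 2 := by positivity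
  set lam0 : ℝ := ρ ^ 2 / σ ^ 2 with hlam0def
  have hlam0 : 0 ≤ lam0 := by positivity
  set A : ℕ → ℝ := Aq n y with hAdef
  have hA : ∀ i, |A i| ≤ 1 := fun i => Aq_abs_le hn hy i
  set G : ℝ → ℝ := fun lam => ∑' i, ncW lam i * A i with hGdef
  set D : ℝ := ∑' i, ncWd lam0 i * A i with hDdef
  have hG : HasDerivAt G D lam0 := hasDerivAt_ncSeries A hA hlam0
  have hD : D = -(ncChiPdf (n + 2) lam0 y) := by
    have S2 : Summable (fun i => ncW lam0 i * A i) := summable_ncW_mul A hA lam0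
    have S3 : Summable (fun i => ncW lam0 i * A (i+1)) :=
      summable_ncW_mul (fun i => A (i+1)) (fun i => hA (i+1)) lam0
    rw [hDdef, tsum_ncWd_mul A hA hlam0, ncChiPdf_eq_telescope hn hy,
      ← Summable.tsum_sub S3 S2, ← tsum_mul_left, ← tsum_neg]
    exact tsum_congr fun i => by ring
  have hslope : Tendsto (slope G lam0) (nhdsWithin lam0 {lam0}ᶜ) (nhds D) :=
    hasDerivAt_iff_tendsto_slope.mp hG
  set lamf : ℝ → ℝ := fun h => (ρ + h) ^ 2 / σ ^ 2 with hlamfdef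
  have hcont : Tendsto lamf (nhds 0) (nhds lam0) := by
    have hc : Continuous lamf := by
      apply Continuous.div_const; fun_prop
    have := hc.tendsto 0
    simpa [hlamfdef] using this
  have hev2 : ∀ᶠ h in nhdsWithin (0:ℝ) {0}ᶜ, 2 * ρ + h ≠ 0 := by
    rcases eq_or_lt_of_le hρ with hρ0 | hρpos
    · filter_upwards [self_mem_nhdsWithin] with h hh
      simp only [Set.mem_compl_iff, Set.mem_singleton_iff] at hh
      rw [← hρ0]; simpa using hh
    · have hnz : (2 * ρ + (0:ℝ)) ≠ 0 := by linarith
      have hcc : ContinuousAt (fun h : ℝ => 2 * ρ + h) 0 := by fun_prop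
      exact (hcc.eventually_ne hnz).filter_mono nhdsWithin_le_nhds
  have hevne : ∀ᶠ h in nhdsWithin (0:ℝ) {0}ᶜ, lamf h ∈ ({lam0}ᶜ : Set ℝ) := by
    filter_upwards [self_mem_nhdsWithin, hev2] with h hh h2
    simp only [Set.mem_compl_iff, Set.mem_singleton_iff] at hh ⊢
    intro heq
    have hne : h * (2 * ρ + h) ≠ 0 := mul_ne_zero hh h2
    apply hne
    have : (ρ + h) ^ 2 = ρ ^ 2 := by
      have heq' : (ρ + h) ^ 2 / σ ^ 2 = ρ ^ 2 / σ ^ 2 := heq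
      rw [div_left_inj' hσ2.ne'] at heq'
      linarith [heq']
    nlinarith [this]
  have hmap : Tendsto lamf (nhdsWithin (0:ℝ) {0}ᶜ) (nhdsWithin lam0 {lam0}ᶜ) :=
    tendsto_nhdsWithin_of_tendsto_nhds_of_eventually_within lamf
      (hcont.mono_left nhdsWithin_le_nhds) hevne
  have hcomp : Tendsto (fun h => -(slope G lam0 (lamf h))) (nhdsWithin (0:ℝ) {0}ᶜ)
      (nhds (ncChiPdf (n + 2) lam0 y)) := by
    have := (hslope.comp hmap).neg
    rw [hD, neg_neg] at this
    exact this
  refine hcomp.congr' ?_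
  filter_upwards [self_mem_nhdsWithin, hev2] with h hh h2
  simp only [Set.mem_compl_iff, Set.mem_singleton_iff] at hh
  have hne : h * (2 * ρ + h) ≠ 0 := mul_ne_zero hh h2
  have hlf : 0 ≤ lamf h := by positivity
  have hden : lamf h - lam0 = h * (2 * ρ + h) / σ ^ 2 := by
    rw [hlamfdef, hlam0def]
    field_simp
    ring
  rw [slope_def_field, ncChiCdf_eq hn hlam0 hy, ncChiCdf_eq hn hlf hy]
  have hG1 : G lam0 = ∑' i, ncW lam0 i * Aq n y i := rfl
  have hG2 : G (lamf h) = ∑' i, ncW (lamf h) i * Aq n y i := rfl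
  rw [← hG1, ← hG2, hden]
  field_simp
  ring
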